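/- Let m ∈ ℕ be odd with m ≥ 1, γ, n > 0, 0 < x₀ < k, A = (k/x₀)^n − 1, and g(t) = −(γn/m)(t−t₀) + A^{1/m}. Then with t₁ = t₀ + m(1 + A^{1/m})/(γ n), the function x(t) = k/(1 + g(t)^m)^{1/n} is well defined on [t₀, t₁) (the denominator base 1 + g(t)^m is positive there), is strictly increasing on [t₀, t₁), and x(t) → ∞ as t → t₁⁻. -/

import Mathlib

open Real Filter

/-- Case 3b (`m` odd): the curve is well defined and strictly increasing on `[t₀, t₁)`
and explodes as `t → t₁⁻`. -/
theorem case3b_explosion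
    (γ n k x₀ : ℝ) (t₀ : ℝ) (hγ : 0 < γ) (hn : 0 < n) (hx₀ : 0 < x₀) (hx₀k : x₀ < k)
    (m : ℕ) (hm : Odd m) (hm1 : 1 ≤ m)
    (A : ℝ) (hA : A = (k / x₀) ^ n - 1)
    (g x : ℝ → ℝ)
    (hg : ∀ t, g t = -(γ * n / m) * (t - t₀) + A ^ ((1 : ℝ) / m))
    (hx : ∀ t, x t = k / (1 + (g t) ^ m) ^ (1 / n))
    (t₁ : ℝ) (ht₁ : t₁ = t₀ + m * (1 + A ^ ((1 : ℝ) / m)) / (γ * n)) :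
    (∀ t ∈ Set.Ico t₀ t₁, 0 < 1 + (g t) ^ m) ∧
      StrictMonoOn x (Set.Ico t₀ t₁) ∧
      Tendsto x (nhdsWithin t₁ (Set.Iio t₁)) atTop := by
  have hk : 0 < k := hx₀.trans hx₀k
  have hm0 : (0:ℝ) < (m:ℝ) := by exact_mod_cast hm1
  have hγn : 0 < γ * n := mul_pos hγ hn
  have hA0 : 0 < A := by
    rw [hA]
    have h1 : (1:ℝ) < k / x₀ := (one_lt_div hx₀).2 hx₀k
    have := Real.one_lt_rpow_iff_of_pos (by linarith : (0:ℝ) < k / x₀) (y := n)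
    have : (1:ℝ) < (k / x₀) ^ n := this.2 (Or.inl ⟨h1, hn⟩)
    linarith
  set B : ℝ := A ^ ((1 : ℝ) / m) with hB
  have hB0 : 0 < B := Real.rpow_pos_of_pos hA0 _
  -- g is strictly antitone
  have hganti : StrictAnti g := by
    intro s t hst
    rw [hg s, hg t]
    have hc : 0 < γ * n / m := div_pos hγn hm0
    nlinarith
  -- value of g at t₁
  have hgt₁ : g t₁ = -1 := by
    rw [hg, ht₁]
    field_simp
    ring
  -- g t > -1 for t < t₁
  have hggt : ∀ t, t < t₁ → -1 < g t := fun t ht => hgt₁ ▸ hganti ht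
  -- positivity of 1 + g t ^ m for t < t₁
  have hpos : ∀ t, t < t₁ → 0 < 1 + (g t) ^ m := by
    intro t ht
    have h1 : (-1:ℝ) ^ m < (g t) ^ m := hm.strictMono_pow (hggt t ht)
    rw [hm.neg_one_pow] at h1
    linarith
  refine ⟨fun t ht => hpos t ht.2, ?_, ?_⟩
  · -- strict monotonicity
    intro s hs t ht hst
    rw [hx s, hx t]
    have hps := hpos s hs.2
    have hpt := hpos t ht.2
    have hlt : (g t) ^ m < (g s) ^ m := hm.strictMono_pow (hganti hst)
    have h2 : (1 + (g t) ^ m) ^ (1 / n) < (1 + (g s) ^ m) ^ (1 / n) :=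
      Real.rpow_lt_rpow hpt.le (by linarith) (by positivity)
    exact div_lt_div_of_pos_left hk (Real.rpow_pos_of_pos hpt _) h2
  · -- explosion
    have hgc : Continuous g := by
      simp only [funext hg]; continuity
    have hlim0 : Tendsto (fun t => 1 + (g t) ^ m) (nhdsWithin t₁ (Set.Iio t₁)) (nhds 0) := by
      have : Continuous (fun t => 1 + (g t) ^ m) := by continuity
      have h := (this.tendsto t₁).mono_left (nhdsWithin_le_nhds (s := Set.Iio t₁))
      simpa [hgt₁, hm.neg_one_pow] using h
    have hlimr : Tendsto (fun t => (1 + (g t) ^ m) ^ (1 / n))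
        (nhdsWithin t₁ (Set.Iio t₁)) (nhdsWithin 0 (Set.Ioi 0)) := by
      rw [tendsto_nhdsWithin_iff]
      constructor
      · have hc : ContinuousAt (fun y : ℝ => y ^ (1 / n)) 0 :=
          Real.continuousAt_rpow_const 0 (1 / n) (Or.inr (by positivity))
        have := (hc.tendsto.comp hlim0)
        simpa [Function.comp_def, one_div, Real.zero_rpow (show n⁻¹ ≠ 0 by positivity)] using this
      · filter_upwards [self_mem_nhdsWithin] with t ht
        exact Real.rpow_pos_of_pos (hpos t ht) _
    have hinv : Tendsto (fun t => ((1 + (g t) ^ m) ^ (1 / n))⁻¹)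
        (nhdsWithin t₁ (Set.Iio t₁)) atTop := hlimr.inv_tendsto_nhdsGT_zero
    have : Tendsto (fun t => k * ((1 + (g t) ^ m) ^ (1 / n))⁻¹)
        (nhdsWithin t₁ (Set.Iio t₁)) atTop := hinv.const_mul_atTop hk
    refine this.congr fun t => ?_
    simp [hx t, div_eq_mul_inv]
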